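/- The number of arrays Y ∈ F₂^{n×L} at ρ_TE-distance exactly k from a fixed X, for 1 ≤ k ≤ L, equals Σ_{i=1}^k C(n,i)·C(k-1,i-1)·2^{k-i}. -/

import Mathlib

/-- Row-wise tail-erasure distance: 0 if rows equal, else `L - (least differing index)`,
which equals `L - min{i : x_i ≠ y_i} + 1` in 1-indexed notation. -/
def rhoRow {L : ℕ} (x y : Fin L → ZMod 2) : ℕ :=
  if h : x = y then 0
  else
    L - (Finset.univ.filter (fun j => x j ≠ y j)).min' (by
      obtain ⟨j, hj⟩ := Function.ne_iff.mp h
      exact ⟨j, Finset.mem_filter.mpr ⟨Finset.mem_univ j, hj⟩⟩)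

/-- The tail-erasure distance on binary `n × L` arrays: sum of row distances. -/
def rhoTE {n L : ℕ} (X Y : Fin n → Fin L → ZMod 2) : ℕ :=
  ∑ i, rhoRow (X i) (Y i)

open Finset

lemma zmod2_ne_iff {a b : ZMod 2} : a ≠ b ↔ a = b + 1 := by revert a b; decide

lemma rhoRow_eq_zero_iff {L : ℕ} (x y : Fin L → ZMod 2) : rhoRow x y = 0 ↔ y = x := by
  unfold rhoRow
  split
  · simp_all [eq_comm]
  · rename_i h
    have hne : (Finset.univ.filter (fun j => x j ≠ y j)).Nonempty := by
      obtain ⟨j, hj⟩ := Function.ne_iff.mp h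
      exact ⟨j, Finset.mem_filter.mpr ⟨Finset.mem_univ j, hj⟩⟩
    have : ((Finset.univ.filter (fun j => x j ≠ y j)).min' hne : ℕ) < L :=
      ((Finset.univ.filter (fun j => x j ≠ y j)).min' hne).isLt
    constructor
    · omega
    · intro hyx; exact absurd hyx.symm h

lemma rhoRow_char {L : ℕ} (x y : Fin L → ZMod 2) (d : ℕ) (hd1 : 1 ≤ d) (hdL : d ≤ L) :
    rhoRow x y = d ↔
      ∀ j : Fin L, ((j : ℕ) < L - d → y j = x j) ∧ ((j : ℕ) = L - d → y j = x j + 1) := by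
  have hpL : L - d < L := by omega
  constructor
  · intro h
    have hxy : x ≠ y := by
      intro he; rw [rhoRow, dif_pos he] at h; omega
    rw [rhoRow, dif_neg hxy] at h
    have hne : (Finset.univ.filter (fun j => x j ≠ y j)).Nonempty := by
      obtain ⟨j, hj⟩ := Function.ne_iff.mp hxy
      exact ⟨j, Finset.mem_filter.mpr ⟨Finset.mem_univ j, hj⟩⟩
    set m := Finset.min' _ hne with hmdef
    have hmem := Finset.min'_mem _ hne
    have hmL : (m : ℕ) < L := m.isLt
    have hmval : (m : ℕ) = L - d := by omega
    intro j
    constructor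
    · intro hj
      by_contra hne'
      have : j ∈ Finset.univ.filter (fun j => x j ≠ y j) :=
        Finset.mem_filter.mpr ⟨Finset.mem_univ j, fun he => hne' he.symm⟩
      have := Finset.min'_le _ _ this
      rw [← hmdef] at this
      have : (m : ℕ) ≤ (j : ℕ) := this
      omega
    · intro hj
      have hjm : j = m := Fin.ext (by omega)
      have : x m ≠ y m := (Finset.mem_filter.mp hmem).2
      rw [hjm]
      exact zmod2_ne_iff.mp (Ne.symm this)
  · intro h
    have hpne : y ⟨L - d, hpL⟩ ≠ x ⟨L - d, hpL⟩ := by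
      rw [(h ⟨L - d, hpL⟩).2 rfl]
      have : ∀ a : ZMod 2, a + 1 ≠ a := by decide
      exact this _
    have hxy : x ≠ y := fun he => hpne (by rw [he])
    rw [rhoRow, dif_neg hxy]
    have hne : (Finset.univ.filter (fun j => x j ≠ y j)).Nonempty := by
      obtain ⟨j, hj⟩ := Function.ne_iff.mp hxy
      exact ⟨j, Finset.mem_filter.mpr ⟨Finset.mem_univ j, hj⟩⟩
    set m := Finset.min' _ hne with hmdef
    have hmem := Finset.min'_mem _ hne
    have h1 : (m : ℕ) ≤ L - d := by
      have := Finset.min'_le (Finset.univ.filter (fun j => x j ≠ y j)) ⟨L - d, hpL⟩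
        (Finset.mem_filter.mpr ⟨Finset.mem_univ _, fun he => hpne he.symm⟩)
      rw [← hmdef] at this
      exact this
    have h2 : ¬ ((m : ℕ) < L - d) := by
      intro hlt
      exact (Finset.mem_filter.mp hmem).2 ((h m).1 hlt).symm
    omega

lemma rowCount0 {L : ℕ} (x : Fin L → ZMod 2) :
    #(univ.filter fun y => rhoRow x y = 0) = 1 := by
  have h : (univ.filter fun y => rhoRow x y = 0) = {x} := by
    ext y; simp [rhoRow_eq_zero_iff]
  rw [h, card_singleton]

lemma rowCount {L : ℕ} (x : Fin L → ZMod 2) (d : ℕ) (hd1 : 1 ≤ d) (hdL : d ≤ L) :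
    #(univ.filter fun y => rhoRow x y = d) = 2 ^ (d - 1) := by
  have hpL : L - d < L := by omega
  have hset : (univ.filter fun y => rhoRow x y = d) =
      Fintype.piFinset (fun j : Fin L =>
        if (j : ℕ) < L - d then {x j} else if (j : ℕ) = L - d then {x j + 1} else univ) := by
    ext y
    simp only [mem_filter, mem_univ, true_and, Fintype.mem_piFinset]
    rw [rhoRow_char x y d hd1 hdL]
    constructor
    · intro h j
      rcases lt_trichotomy ((j : ℕ)) (L - d) with hj | hj | hj
      · rw [if_pos hj]; simpa using (h j).1 hj
      · rw [if_neg (by omega), if_pos hj]; simpa using (h j).2 hj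
      · rw [if_neg (by omega), if_neg (by omega)]; exact mem_univ _
    · intro h j
      constructor
      · intro hj; have := h j; rw [if_pos hj] at this; simpa using this
      · intro hj; have := h j; rw [if_neg (by omega), if_pos hj] at this; simpa using this
  rw [hset, Fintype.card_piFinset]
  have hcard : ∀ j : Fin L,
      #(if (j : ℕ) < L - d then ({x j} : Finset (ZMod 2))
        else if (j : ℕ) = L - d then {x j + 1} else univ) =
      if L - d < (j : ℕ) then 2 else 1 := by
    intro j
    rcases lt_trichotomy ((j : ℕ)) (L - d) with hj | hj | hj
    · rw [if_pos hj, if_neg (by omega)]; simp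
    · rw [if_neg (by omega), if_pos hj, if_neg (by omega)]; simp
    · rw [if_neg (by omega), if_neg (by omega), if_pos hj]
      simp [Finset.card_univ]
  rw [Finset.prod_congr rfl (fun j _ => hcard j)]
  rw [Finset.prod_ite, Finset.prod_const, Finset.prod_const, one_pow, mul_one]
  have hfe : (univ.filter fun j : Fin L => L - d < (j : ℕ)) = Finset.Ioi ⟨L - d, hpL⟩ := by
    ext j; simp [Finset.mem_Ioi, Fin.lt_def]
  rw [hfe, Fin.card_Ioi]
  have hv : ((⟨L - d, hpL⟩ : Fin L) : ℕ) = L - d := rfl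
  rw [hv]
  congr 1
  omega

lemma posComp_card : ∀ j, 1 ≤ j → ∀ m, 1 ≤ m →
    #((Finset.Nat.antidiagonalTuple j m).filter fun c => ∀ i, c i ≠ 0) =
      (m - 1).choose (j - 1) := by
  intro j hj
  induction j, hj using Nat.le_induction with
  | base =>
    intro m hm
    have h : ((Finset.Nat.antidiagonalTuple 1 m).filter fun c => ∀ i, c i ≠ 0) =
        {fun _ : Fin 1 => m} := by
      ext c
      simp only [mem_filter, Finset.Nat.mem_antidiagonalTuple, Fin.sum_univ_one,
        Finset.mem_singleton]
      constructor
      · rintro ⟨h1, _⟩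
        funext i
        have : i = 0 := Subsingleton.elim _ _
        rw [this, h1]
      · rintro rfl
        exact ⟨rfl, fun i => by simp only []; omega⟩
    rw [h, card_singleton]
    simp
  | succ j hj ih =>
    intro m hm
    set A := ((Finset.Nat.antidiagonalTuple (j + 1) m).filter fun c => ∀ i, c i ≠ 0) with hA
    have hmaps : ∀ c ∈ A, c 0 ∈ Finset.Icc 1 m := by
      intro c hc
      rw [hA, mem_filter, Finset.Nat.mem_antidiagonalTuple] at hc
      have h1 : c 0 ≠ 0 := hc.2 0
      have h2 : c 0 ≤ m := hc.1 ▸ Finset.single_le_sum (f := c) (fun _ _ => Nat.zero_le _)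
        (mem_univ 0)
      rw [Finset.mem_Icc]
      omega
    rw [Finset.card_eq_sum_card_fiberwise hmaps]
    have hfib : ∀ v ∈ Finset.Icc 1 m, #(A.filter fun c => c 0 = v) =
        #((Finset.Nat.antidiagonalTuple j (m - v)).filter fun d => ∀ i, d i ≠ 0) := by
      intro v hv
      rw [Finset.mem_Icc] at hv
      refine Finset.card_nbij' (fun c => Fin.tail c) (fun d => Fin.cons v d) ?_ ?_ ?_ ?_
      · intro c hc
        simp only [hA, Finset.mem_coe, mem_filter, Finset.Nat.mem_antidiagonalTuple] at hc ⊢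
        obtain ⟨⟨hsum, hnz⟩, h0⟩ := hc
        rw [Fin.sum_univ_succ] at hsum
        constructor
        · simp only [Fin.tail]
          omega
        · exact fun i => hnz i.succ
      · intro d hd
        simp only [hA, Finset.mem_coe, mem_filter, Finset.Nat.mem_antidiagonalTuple] at hd ⊢
        obtain ⟨hsum, hnz⟩ := hd
        refine ⟨⟨?_, ?_⟩, rfl⟩
        · rw [Fin.sum_univ_succ]
          simp only [Fin.cons_zero, Fin.cons_succ]
          omega
        · intro i
          refine Fin.cases ?_ ?_ i
          · simpa using (by omega : v ≠ 0)
          · intro i'; simpa using hnz i'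
      · intro c hc
        simp only [hA, Finset.mem_coe, mem_filter] at hc
        rw [← hc.2]
        exact Fin.cons_self_tail c
      · intro d _
        funext i
        simp [Fin.tail]
    rw [Finset.sum_congr rfl hfib]
    have hterm : ∀ v ∈ Finset.Icc 1 m,
        #((Finset.Nat.antidiagonalTuple j (m - v)).filter fun d => ∀ i, d i ≠ 0) =
        if v = m then 0 else (m - 1 - v).choose (j - 1) := by
      intro v hv
      rw [Finset.mem_Icc] at hv
      by_cases hvm : v = m
      · subst hvm
        rw [if_pos rfl, Nat.sub_self, Finset.Nat.antidiagonalTuple_zero_right,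
          Finset.card_eq_zero]
        rw [Finset.filter_singleton]
        rw [if_neg]
        push_neg
        exact ⟨⟨0, by omega⟩, rfl⟩
      · rw [if_neg hvm, ih (m - v) (by omega)]
        congr 1
        omega
    rw [Finset.sum_congr rfl hterm]
    have hsub : Finset.Icc 1 (m - 1) ⊆ Finset.Icc 1 m := by
      apply Finset.Icc_subset_Icc_right; omega
    rw [← Finset.sum_subset hsub (by
      intro v hv1 hv2
      rw [Finset.mem_Icc] at hv1
      rw [Finset.mem_Icc] at hv2
      rw [if_pos (by omega)])]
    have heq : ∀ v ∈ Finset.Icc 1 (m - 1),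
        (if v = m then 0 else (m - 1 - v).choose (j - 1)) = (m - 1 - v).choose (j - 1) := by
      intro v hv; rw [Finset.mem_Icc] at hv; rw [if_neg (by omega)]
    rw [Finset.sum_congr rfl heq]
    have hre : ∑ v ∈ Finset.Icc 1 (m - 1), (m - 1 - v).choose (j - 1) =
        ∑ u ∈ Finset.range (m - 1), u.choose (j - 1) := by
      refine Finset.sum_nbij' (fun v => m - 1 - v) (fun u => m - 1 - u) ?_ ?_ ?_ ?_ ?_
      · intro v hv; rw [Finset.mem_Icc] at hv; rw [Finset.mem_range]; omega
      · intro u hu; rw [Finset.mem_range] at hu; rw [Finset.mem_Icc]; omega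
      · intro v hv; rw [Finset.mem_Icc] at hv; omega
      · intro u hu; rw [Finset.mem_range] at hu; omega
      · intro v hv; rfl
    rw [hre]
    rcases Nat.lt_or_ge m 2 with hm2 | hm2
    · have : m = 1 := by omega
      subst this
      simp [Nat.choose_eq_zero_of_lt (by omega : 0 < j)]
    · have hsub2 : Finset.Icc (j - 1) (m - 2) ⊆ Finset.range (m - 1) := by
        intro u hu; rw [Finset.mem_Icc] at hu; rw [Finset.mem_range]; omega
      rw [← Finset.sum_subset hsub2 (by
        intro u hu1 hu2
        rw [Finset.mem_range] at hu1
        rw [Finset.mem_Icc] at hu2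
        exact Nat.choose_eq_zero_of_lt (by omega))]
      rw [Nat.sum_Icc_choose]
      congr 1 <;> omega

lemma suppComp_card {n k : ℕ} (hk : 1 ≤ k) (s : Finset (Fin n)) (hs : s.Nonempty) :
    #((Finset.Nat.antidiagonalTuple n k).filter fun c =>
        Finset.univ.filter (fun i => c i ≠ 0) = s) = (k - 1).choose (#s - 1) := by
  have hs1 : 1 ≤ #s := Finset.card_pos.mpr hs
  rw [← posComp_card #s hs1 k hk]
  set σ := s.orderIsoOfFin rfl with hσ
  have hsum_s : ∀ c : Fin n → ℕ, ∑ j : Fin #s, c (σ j) = ∑ i ∈ s, c i := by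
    intro c
    rw [← Finset.sum_coe_sort s c]
    exact Equiv.sum_comp σ.toEquiv (fun x : {i // i ∈ s} => c x)
  refine Finset.card_nbij' (fun c j => c (σ j))
    (fun d i => if h : i ∈ s then d (σ.symm ⟨i, h⟩) else 0) ?_ ?_ ?_ ?_
  · intro c hc
    simp only [Finset.mem_coe, mem_filter, Finset.Nat.mem_antidiagonalTuple] at hc ⊢
    obtain ⟨hsum, hsupp⟩ := hc
    have hmem : ∀ i, c i ≠ 0 ↔ i ∈ s := by
      intro i
      rw [← hsupp, mem_filter]
      simp
    constructor
    · rw [hsum_s c, Finset.sum_subset (Finset.subset_univ s)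
        (fun i _ hi => by by_contra h; exact hi ((hmem i).mp h))]
      exact hsum
    · intro j
      exact (hmem _).mpr (σ j).2
  · intro d hd
    simp only [Finset.mem_coe, mem_filter, Finset.Nat.mem_antidiagonalTuple] at hd ⊢
    obtain ⟨hsum, hnz⟩ := hd
    have hval : ∀ x : {i // i ∈ s},
        (if h : (x : Fin n) ∈ s then d (σ.symm ⟨x, h⟩) else 0) = d (σ.symm x) := by
      intro x
      rw [dif_pos x.2]
    constructor
    · rw [← Finset.sum_subset (Finset.subset_univ s)
        (fun i _ hi => by rw [dif_neg hi])]
      rw [← Finset.sum_attach s, ← Finset.univ_eq_attach]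
      calc ∑ x : {i // i ∈ s}, (if h : (x : Fin n) ∈ s then d (σ.symm ⟨x, h⟩) else 0)
          = ∑ x : {i // i ∈ s}, d (σ.symm x) := Finset.sum_congr rfl (fun x _ => hval x)
        _ = ∑ j, d j := Equiv.sum_comp σ.symm.toEquiv d
        _ = k := hsum
    · ext i
      simp only [mem_filter, mem_univ, true_and]
      constructor
      · intro h
        by_contra hi
        rw [dif_neg hi] at h
        exact h rfl
      · intro hi
        rw [dif_pos hi]
        exact hnz _
  · intro c hc
    simp only [Finset.mem_coe, mem_filter] at hc
    have hmem : ∀ i, c i ≠ 0 ↔ i ∈ s := by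
      intro i
      rw [← hc.2, mem_filter]
      simp
    funext i
    by_cases h : i ∈ s
    · simp only [dif_pos h]
      congr 1
      rw [σ.apply_symm_apply ⟨i, h⟩]
    · simp only [dif_neg h]
      by_contra h0
      exact h ((hmem i).mp (Ne.symm h0))
  · intro d _
    funext j
    have h2 : (σ j : Fin n) ∈ s := (σ j).2
    simp only [dif_pos h2]
    congr 1
    exact σ.symm_apply_apply j

theorem stmt_10 (n L k : ℕ) (hn : 0 < n) (hL : 0 < L) (hk : 1 ≤ k) (hkL : k ≤ L)
    (X : Fin n → Fin L → ZMod 2) :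
    Nat.card {Y : Fin n → Fin L → ZMod 2 | rhoTE X Y = k} =
      ∑ i ∈ Finset.Icc 1 k, n.choose i * (k - 1).choose (i - 1) * 2 ^ (k - i) := by
  classical
  have hcard0 : Nat.card {Y : Fin n → Fin L → ZMod 2 | rhoTE X Y = k} =
      #(univ.filter fun Y : Fin n → Fin L → ZMod 2 => rhoTE X Y = k) := by
    rw [Nat.card_eq_card_toFinset, Set.toFinset_setOf]
  rw [hcard0]
  -- Step 1: fiber by the row-distance profile
  have hmaps : ∀ Y ∈ (univ.filter fun Y : Fin n → Fin L → ZMod 2 => rhoTE X Y = k),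
      (fun i => rhoRow (X i) (Y i)) ∈ Finset.Nat.antidiagonalTuple n k := by
    intro Y hY
    rw [mem_filter] at hY
    rw [Finset.Nat.mem_antidiagonalTuple]
    exact hY.2
  rw [Finset.card_eq_sum_card_fiberwise hmaps]
  -- Step 2: each fiber is a product of row counts
  have hfib : ∀ c ∈ Finset.Nat.antidiagonalTuple n k,
      #((univ.filter fun Y : Fin n → Fin L → ZMod 2 => rhoTE X Y = k).filter
          fun Y => (fun i => rhoRow (X i) (Y i)) = c) =
        ∏ i, (if c i = 0 then 1 else 2 ^ (c i - 1)) := by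
    intro c hc
    rw [Finset.Nat.mem_antidiagonalTuple] at hc
    have hconv : ((univ.filter fun Y : Fin n → Fin L → ZMod 2 => rhoTE X Y = k).filter
          fun Y => (fun i => rhoRow (X i) (Y i)) = c) =
        Fintype.piFinset (fun i => univ.filter fun y => rhoRow (X i) y = c i) := by
      ext Y
      simp only [mem_filter, mem_univ, true_and, Fintype.mem_piFinset, funext_iff]
      constructor
      · rintro ⟨_, h⟩ i
        exact h i
      · intro h
        refine ⟨?_, h⟩
        rw [rhoTE, Finset.sum_congr rfl (fun i _ => h i)]
        exact hc
    rw [hconv, Fintype.card_piFinset]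
    refine Finset.prod_congr rfl fun i _ => ?_
    by_cases h0 : c i = 0
    · rw [h0, if_pos rfl]
      exact rowCount0 (X i)
    · rw [if_neg h0]
      have hle : c i ≤ k := hc ▸ Finset.single_le_sum (f := c) (fun _ _ => Nat.zero_le _)
        (mem_univ i)
      exact rowCount (X i) (c i) (by omega) (by omega)
  rw [Finset.sum_congr rfl hfib]
  -- Step 3: fiber the profiles by their support
  rw [← Finset.sum_fiberwise_of_maps_to
    (g := fun c : Fin n → ℕ => univ.filter fun i => c i ≠ 0)
    (t := (univ : Finset (Fin n)).powerset)
    (fun c _ => Finset.mem_powerset.mpr (Finset.subset_univ _))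
    (fun c => ∏ i, (if c i = 0 then 1 else 2 ^ (c i - 1)))]
  -- Step 4: evaluate the inner sums
  have hinner : ∀ s ∈ (univ : Finset (Fin n)).powerset,
      (∑ c ∈ (Finset.Nat.antidiagonalTuple n k).filter
          (fun c => univ.filter (fun i => c i ≠ 0) = s),
        ∏ i, (if c i = 0 then 1 else 2 ^ (c i - 1))) =
      (if #s = 0 then 0 else (k - 1).choose (#s - 1) * 2 ^ (k - #s)) := by
    intro s _
    by_cases hs : s = ∅
    · subst hs
      rw [if_pos Finset.card_empty]
      convert Finset.sum_empty
      rw [Finset.filter_eq_empty_iff]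
      intro c hc
      rw [Finset.Nat.mem_antidiagonalTuple] at hc
      intro hsupp
      have : ∀ i, c i = 0 := by
        intro i
        by_contra h
        have : i ∈ (∅ : Finset (Fin n)) := hsupp ▸ mem_filter.mpr ⟨mem_univ i, h⟩
        simp at this
      rw [Finset.sum_congr rfl (fun i _ => this i)] at hc
      simp at hc
      omega
    · have hsne : s.Nonempty := Finset.nonempty_iff_ne_empty.mpr hs
      have hs1 : 1 ≤ #s := Finset.card_pos.mpr hsne
      rw [if_neg (by omega)]
      have hterm : ∀ c ∈ (Finset.Nat.antidiagonalTuple n k).filter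
          (fun c => univ.filter (fun i => c i ≠ 0) = s),
          (∏ i, (if c i = 0 then 1 else 2 ^ (c i - 1))) = 2 ^ (k - #s) := by
        intro c hc
        rw [mem_filter, Finset.Nat.mem_antidiagonalTuple] at hc
        obtain ⟨hsum, hsupp⟩ := hc
        have hmem : ∀ i, c i ≠ 0 ↔ i ∈ s := by
          intro i
          rw [← hsupp, mem_filter]
          simp
        rw [← Finset.prod_subset (Finset.subset_univ s) (fun i _ hi => by
          rw [if_pos]
          by_contra h
          exact hi ((hmem i).mp h))]
        have hpos : ∀ i ∈ s, (if c i = 0 then 1 else 2 ^ (c i - 1)) = 2 ^ (c i - 1) := by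
          intro i hi
          rw [if_neg]
          intro h
          exact absurd ((hmem i).mpr hi) (by simp [h])
        rw [Finset.prod_congr rfl hpos, Finset.prod_pow_eq_pow_sum]
        congr 1
        have hsum_s : ∑ i ∈ s, c i = k := by
          rw [Finset.sum_subset (Finset.subset_univ s) (fun i _ hi => by
            by_contra h
            exact hi ((hmem i).mp h))]
          exact hsum
        have h1le : ∀ i ∈ s, 1 ≤ c i := fun i hi => by
          have := (hmem i).mpr hi; omega
        rw [Finset.sum_tsub_distrib s h1le, hsum_s, Finset.sum_const, smul_eq_mul, mul_one]
      rw [Finset.sum_congr rfl hterm, Finset.sum_const, smul_eq_mul]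
      rw [suppComp_card hk s hsne]
  rw [Finset.sum_congr rfl hinner]
  -- Step 5: group by cardinality
  rw [Finset.sum_powerset_apply_card
    (fun i => if i = 0 then 0 else (k - 1).choose (i - 1) * 2 ^ (k - i))]
  rw [Finset.card_univ, Fintype.card_fin]
  -- Step 6: compare index ranges
  have hA : ∑ i ∈ Finset.range (n + 1),
      n.choose i • (if i = 0 then 0 else (k - 1).choose (i - 1) * 2 ^ (k - i)) =
      ∑ i ∈ Finset.range (n + k + 1),
      n.choose i • (if i = 0 then 0 else (k - 1).choose (i - 1) * 2 ^ (k - i)) := by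
    refine Finset.sum_subset (Finset.range_subset_range.mpr (by omega)) ?_
    intro i hi1 hi2
    rw [Finset.mem_range] at hi1 hi2
    rw [Nat.choose_eq_zero_of_lt (by omega), zero_smul]
  have hB : ∑ i ∈ Finset.Icc 1 k, n.choose i * (k - 1).choose (i - 1) * 2 ^ (k - i) =
      ∑ i ∈ Finset.range (n + k + 1),
      n.choose i • (if i = 0 then 0 else (k - 1).choose (i - 1) * 2 ^ (k - i)) := by
    have hcong : ∀ i ∈ Finset.Icc 1 k,
        n.choose i * (k - 1).choose (i - 1) * 2 ^ (k - i) =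
        n.choose i • (if i = 0 then 0 else (k - 1).choose (i - 1) * 2 ^ (k - i)) := by
      intro i hi
      rw [Finset.mem_Icc] at hi
      rw [if_neg (by omega), smul_eq_mul, mul_assoc]
    rw [Finset.sum_congr rfl hcong]
    refine Finset.sum_subset ?_ ?_
    · intro i hi
      rw [Finset.mem_Icc] at hi
      rw [Finset.mem_range]
      omega
    · intro i hi1 hi2
      rw [Finset.mem_range] at hi1
      rw [Finset.mem_Icc] at hi2
      by_cases h0 : i = 0
      · rw [if_pos h0, smul_zero]
      · rw [if_neg h0, Nat.choose_eq_zero_of_lt (show k - 1 < i - 1 by omega), zero_mul,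
          smul_zero]
  rw [hA, hB]
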